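/- arXiv:1506.05920 — 2 statements merged into one kernel-verified Lean document; each statement's English description precedes it below -/
import Mathlib

section
/- Termination and correctness of the basic divide-and-conquer dynamic program: define recursively DCDP(I) for nonempty finite I ⊆ {1,…,n} by: compute p₀ maximizing J over S_L(I); if p₀ ∈ S(I), return p₀; otherwise split I into two disjoint nonempty subsets I₁, I₂ with I₁ ∪ I₂ = I, recursively compute p₁ = DCDP(I₁), p₂ = DCDP(I₂), and return whichever has larger J-value. Then this recursion terminates and DCDP(N_n) maximizes J over S(N_n), provided S(J') is nonempty for every subset J' encountered. -/
open Set

/-- Feasible region `S(I)`: tuples `p ∈ {1,…,n}^{m+1}` with last entry in `I`,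
chain constraints `|p_i − p_{i+1}| ≤ ς`, and wrap constraint `|p_last − p_0| ≤ ς`. -/
def SReg (n m ς : ℕ) (I : Set ℤ) : Set (Fin (m+1) → ℤ) :=
  {p | (∀ i, 1 ≤ p i ∧ p i ≤ (n : ℤ)) ∧ p (Fin.last m) ∈ I ∧
       (∀ i : Fin m, |p i.castSucc - p i.succ| ≤ (ς : ℤ)) ∧
       |p (Fin.last m) - p 0| ≤ (ς : ℤ)}

/-- Relaxed region `S_L(I)`: the wrap constraint is dropped; instead the first
entry must lie in `I + [−ς, ς]`. -/
def SLReg (n m ς : ℕ) (I : Set ℤ) : Set (Fin (m+1) → ℤ) :=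
  {p | (∀ i, 1 ≤ p i ∧ p i ≤ (n : ℤ)) ∧ p (Fin.last m) ∈ I ∧
       (∃ j ∈ I, |p 0 - j| ≤ (ς : ℤ)) ∧
       (∀ i : Fin m, |p i.castSucc - p i.succ| ≤ (ς : ℤ))}

/-- The recursive specification of the basic divide-and-conquer dynamic program
`DCDP_Basic`: on every nonempty finite `I ⊆ {1,…,n}`, either `F I` is a
maximizer of `J` over the relaxed region `S_L(I)` that happens to be feasible
(so it is returned directly), or every relaxed maximizer is infeasible and
`F I` is whichever of the two recursive results `F I₁`, `F I₂` (for some split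
of `I` into disjoint nonempty `I₁ ∪ I₂ = I`) has the larger `J`-value. -/
def DCDPBasicSpec (n m ς : ℕ) (J : (Fin (m+1) → ℤ) → ℝ)
    (F : Set ℤ → (Fin (m+1) → ℤ)) : Prop :=
  ∀ I : Set ℤ, I.Finite → I.Nonempty → I ⊆ Set.Icc 1 (n : ℤ) →
    ((F I ∈ SLReg n m ς I ∧ (∀ q ∈ SLReg n m ς I, J q ≤ J (F I)) ∧
        F I ∈ SReg n m ς I) ∨
     ((∀ pL ∈ SLReg n m ς I, (∀ q ∈ SLReg n m ς I, J q ≤ J pL) →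
          pL ∉ SReg n m ς I) ∧
      ∃ I₁ I₂ : Set ℤ, Disjoint I₁ I₂ ∧ I₁.Nonempty ∧ I₂.Nonempty ∧ I₁ ∪ I₂ = I ∧
        F I = (if J (F I₂) ≤ J (F I₁) then F I₁ else F I₂)))

lemma sreg_subset_slreg (n m ς : ℕ) (I : Set ℤ) : SReg n m ς I ⊆ SLReg n m ς I := by
  rintro p ⟨hb, hl, hc, hw⟩
  exact ⟨hb, hl, ⟨p (Fin.last m), hl, by rwa [abs_sub_comm]⟩, hc⟩

lemma slreg_finite (n m ς : ℕ) (I : Set ℤ) : (SLReg n m ς I).Finite := by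
  apply Set.Finite.subset (Set.Finite.pi (fun _ : Fin (m+1) => Set.finite_Icc (1:ℤ) n))
  rintro p ⟨hb, -, -, -⟩
  exact fun i _ => ⟨(hb i).1, (hb i).2⟩

lemma slreg_nonempty (n m ς : ℕ) (I : Set ℤ) (hne : I.Nonempty)
    (hI : I ⊆ Set.Icc 1 (n:ℤ)) : (SLReg n m ς I).Nonempty := by
  obtain ⟨h, hh⟩ := hne
  exact ⟨fun _ => h, fun i => ⟨(hI hh).1, (hI hh).2⟩, hh, ⟨h, hh, by simp⟩, fun i => by simp⟩

lemma exists_slmax (n m ς : ℕ) (J : (Fin (m+1) → ℤ) → ℝ) (I : Set ℤ) (hne : I.Nonempty)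
    (hI : I ⊆ Set.Icc 1 (n:ℤ)) : ∃ p ∈ SLReg n m ς I, ∀ q ∈ SLReg n m ς I, J q ≤ J p :=
  Set.exists_max_image _ J (slreg_finite n m ς I) (slreg_nonempty n m ς I hne hI)

lemma slreg_singleton (n m ς : ℕ) (h : ℤ) : SLReg n m ς {h} = SReg n m ς {h} := by
  ext p
  constructor
  · rintro ⟨hb, hl, ⟨j, hj, h0⟩, hc⟩
    rw [Set.mem_singleton_iff] at hj; subst hj
    rw [Set.mem_singleton_iff] at hl
    exact ⟨hb, hl, hc, by rw [hl, abs_sub_comm]; exact h0⟩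
  · rintro ⟨hb, hl, hc, hw⟩
    rw [Set.mem_singleton_iff] at hl
    exact ⟨hb, hl, ⟨h, rfl, by rw [← hl, abs_sub_comm]; exact hw⟩, hc⟩

lemma sreg_union (n m ς : ℕ) (I₁ I₂ : Set ℤ) :
    SReg n m ς (I₁ ∪ I₂) = SReg n m ς I₁ ∪ SReg n m ς I₂ := by
  ext p
  simp only [SReg, Set.mem_setOf_eq, Set.mem_union]
  tauto

open Classical in
noncomputable def dcdpG (n m ς : ℕ) (J : (Fin (m+1) → ℤ) → ℝ) (s : Finset ℤ) :
    Fin (m+1) → ℤ :=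
  if hx : ∃ p ∈ SLReg n m ς ↑s, (∀ q ∈ SLReg n m ς ↑s, J q ≤ J p) ∧ p ∈ SReg n m ς ↑s then
    hx.choose
  else if h2 : 2 ≤ s.card then
    have hne : s.Nonempty := Finset.card_pos.mp (by omega)
    if J (dcdpG n m ς J (s.erase (s.min' hne))) ≤ J (dcdpG n m ς J {s.min' hne}) then
      dcdpG n m ς J {s.min' hne}
    else dcdpG n m ς J (s.erase (s.min' hne))
  else fun _ => 1
termination_by s.card
decreasing_by
  all_goals
    first
      | exact Finset.card_erase_lt_of_mem (s.min'_mem hne)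
      | (simp only [Finset.card_singleton]; omega)

open Classical in
noncomputable def dcdpF (n m ς : ℕ) (J : (Fin (m+1) → ℤ) → ℝ) (I : Set ℤ) :
    Fin (m+1) → ℤ :=
  if hI : I.Finite then dcdpG n m ς J hI.toFinset else fun _ => 1

lemma dcdpF_coe (n m ς : ℕ) (J : (Fin (m+1) → ℤ) → ℝ) (t : Finset ℤ) :
    dcdpF n m ς J ↑t = dcdpG n m ς J t := by
  rw [dcdpF, dif_pos t.finite_toSet]
  exact congrArg (dcdpG n m ς J) (Finset.coe_injective (by simp))

lemma dcdpF_spec (n m ς : ℕ) (J : (Fin (m+1) → ℤ) → ℝ) :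
    DCDPBasicSpec n m ς J (dcdpF n m ς J) := by
  intro I hfin hne hsub
  have hco : (↑hfin.toFinset : Set ℤ) = I := hfin.coe_toFinset
  have hFI : dcdpF n m ς J I = dcdpG n m ς J hfin.toFinset := by
    conv_lhs => rw [← hco]
    exact dcdpF_coe n m ς J hfin.toFinset
  set s := hfin.toFinset with hs
  by_cases hx : ∃ p ∈ SLReg n m ς ↑s, (∀ q ∈ SLReg n m ς ↑s, J q ≤ J p) ∧ p ∈ SReg n m ς ↑s
  · left
    have hG : dcdpG n m ς J s = hx.choose := by rw [dcdpG, dif_pos hx]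
    rw [hFI, hG, ← hco]
    obtain ⟨h1, h2, h3⟩ := hx.choose_spec
    exact ⟨h1, h2, h3⟩
  · right
    have hsne : s.Nonempty := by
      rw [← Finset.coe_nonempty, hco]; exact hne
    refine ⟨?_, ?_⟩
    · intro pL hpL hmax hS
      exact hx ⟨pL, by rwa [hco], fun q hq => hmax q (by rwa [hco] at hq), by rwa [hco]⟩
    · have h2 : 2 ≤ s.card := by
        by_contra hlt
        have hc1 : s.card = 1 := by
          have := Finset.card_pos.mpr hsne; omega
        obtain ⟨a, ha⟩ := Finset.card_eq_one.mp hc1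
        obtain ⟨p, hp, hpm⟩ := exists_slmax n m ς J ↑s (by rw [hco]; exact hne)
          (by rw [hco]; exact hsub)
        apply hx
        refine ⟨p, hp, hpm, ?_⟩
        have hsa : (↑s : Set ℤ) = {a} := by rw [ha]; simp
        rw [hsa] at hp ⊢
        rw [← slreg_singleton]
        exact hp
      set a := s.min' hsne with ha
      have hGs : dcdpG n m ς J s =
          if J (dcdpG n m ς J (s.erase a)) ≤ J (dcdpG n m ς J {a}) then
            dcdpG n m ς J {a}
          else dcdpG n m ς J (s.erase a) := by
        rw [dcdpG, dif_neg hx, dif_pos h2]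
      refine ⟨{a}, ↑(s.erase a), ?_, ⟨a, rfl⟩, ?_, ?_, ?_⟩
      · rw [Set.disjoint_singleton_left]
        simp
      · rw [Finset.coe_nonempty, ← Finset.card_pos,
          Finset.card_erase_of_mem (s.min'_mem hsne)]
        omega
      · rw [← hco]
        ext x
        simp only [Set.mem_union, Set.mem_singleton_iff, Finset.coe_erase, Set.mem_diff,
          Finset.mem_coe]
        constructor
        · rintro (rfl | ⟨hx', -⟩)
          · exact s.min'_mem hsne
          · exact hx'
        · intro hx'
          by_cases hxa : x = a
          · exact Or.inl hxa
          · exact Or.inr ⟨hx', hxa⟩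
      · have e1 : dcdpF n m ς J {a} = dcdpG n m ς J {a} := by
          have : (({a} : Finset ℤ) : Set ℤ) = ({a} : Set ℤ) := by simp
          rw [← this, dcdpF_coe]
        have e2 : dcdpF n m ς J ↑(s.erase a) = dcdpG n m ς J (s.erase a) :=
          dcdpF_coe n m ς J _
        rw [hFI, e1, e2, hGs]

lemma spec_correct (n m ς : ℕ) (J : (Fin (m+1) → ℤ) → ℝ)
    (F : Set ℤ → (Fin (m+1) → ℤ)) (hF : DCDPBasicSpec n m ς J F) :
    ∀ N : ℕ, ∀ I : Set ℤ, I.Finite → I.ncard ≤ N → I.Nonempty → I ⊆ Set.Icc 1 (n:ℤ) →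
      F I ∈ SReg n m ς I ∧ ∀ q ∈ SReg n m ς I, J q ≤ J (F I) := by
  intro N
  induction N with
  | zero =>
    intro I hfin hcard hne _
    exfalso
    have := (Set.ncard_pos hfin).mpr hne
    omega
  | succ N ih =>
    intro I hfin hcard hne hsub
    rcases hF I hfin hne hsub with ⟨-, hmax, hS⟩ | ⟨-, I₁, I₂, hdisj, hne1, hne2, hun, heq⟩
    · exact ⟨hS, fun q hq => hmax q (sreg_subset_slreg n m ς I hq)⟩
    · have hsub1 : I₁ ⊆ I := by rw [← hun]; exact Set.subset_union_left
      have hsub2 : I₂ ⊆ I := by rw [← hun]; exact Set.subset_union_right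
      have hfin1 : I₁.Finite := hfin.subset hsub1
      have hfin2 : I₂.Finite := hfin.subset hsub2
      have hcards : I₁.ncard + I₂.ncard = I.ncard := by
        rw [← hun]; exact (Set.ncard_union_eq hdisj hfin1 hfin2).symm
      have hp1 := (Set.ncard_pos hfin1).mpr hne1
      have hp2 := (Set.ncard_pos hfin2).mpr hne2
      obtain ⟨hS1, hm1⟩ := ih I₁ hfin1 (by omega) hne1 (hsub1.trans hsub)
      obtain ⟨hS2, hm2⟩ := ih I₂ hfin2 (by omega) hne2 (hsub2.trans hsub)
      rw [heq]
      constructor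
      · rw [← hun, sreg_union]
        split_ifs
        · exact Or.inl hS1
        · exact Or.inr hS2
      · intro q hq
        rw [← hun, sreg_union] at hq
        split_ifs with h
        · rcases hq with h1 | h2
          · exact hm1 q h1
          · exact le_trans (hm2 q h2) h
        · rcases hq with h1 | h2
          · exact le_trans (hm1 q h1) (le_of_not_ge h)
          · exact hm2 q h2

/-- termination and correctness of the basic
divide-and-conquer dynamic program: some total function satisfies the
recursive specification (the recursion terminates), and every function
satisfying it returns a maximizer of `J` over `S(N_n)` on input `N_n`. -/
theorem dcdp_basic_correct (n m ς : ℕ) (hn : 1 ≤ n) (hς : 1 ≤ ς)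
    (L : Fin (m+1) → ℤ → ℝ) (J : (Fin (m+1) → ℤ) → ℝ)
    (hJ : J = fun p => ∑ i, L i (p i)) :
    (∃ F : Set ℤ → (Fin (m+1) → ℤ), DCDPBasicSpec n m ς J F) ∧
    (∀ F : Set ℤ → (Fin (m+1) → ℤ), DCDPBasicSpec n m ς J F →
      F (Set.Icc 1 (n : ℤ)) ∈ SReg n m ς (Set.Icc 1 (n : ℤ)) ∧
      ∀ q ∈ SReg n m ς (Set.Icc 1 (n : ℤ)), J q ≤ J (F (Set.Icc 1 (n : ℤ)))) := by
  constructor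
  · exact ⟨dcdpF n m ς J, dcdpF_spec n m ς J⟩
  · intro F hF
    exact spec_correct n m ς J F hF (Set.Icc 1 (n:ℤ)).ncard _ (Set.finite_Icc _ _)
      le_rfl (Set.nonempty_Icc.mpr (by exact_mod_cast hn)) (subset_refl _)
end

section
/- Lemma 1 of the paper (full correctness of DCDP with pruning): for any nonempty I₀ ⊆ {1,…,n} and any ℓ ∈ ℝ ∪ {−∞}, the procedure DCDP(I₀, ℓ) — which computes p_L maximizing J over S_L(I₀); returns (J₀ = −∞, ℓ₀ = ℓ) if ℓ > J(p_L) (Rule A); returns (p₀ = p_L, J₀ = J(p_L), ℓ₀ = max(ℓ, J₀)) if p_L ∈ S(I₀) (Rule B); and otherwise splits I₀ = I₁ ∪ I₂, computes (p₁, J₁, ℓ₁) = DCDP(I₁, ℓ), (p₂, J₂, ℓ₂) = DCDP(I₂, ℓ₁), and returns the better of p₁, p₂ with ℓ₀ = max(ℓ₂, J₀) (Rule C) — satisfies: if max_{S(I₀)} J ≥ ℓ then p₀ ∈ argmax_{S(I₀)} J and J₀ = ℓ₀ = J(p₀) ≥ ℓ; and if max_{S(I₀)} J < ℓ then J₀ <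 ℓ₀ = ℓ. -/
open Set

/-- The recursive specification of `DCDP` with pruning (Algorithm A of the
paper). `D I₀ ℓ = (p₀, J₀, ℓ₀)`.  On every nonempty finite `I₀ ⊆ {1,…,n}` and
every `ℓ ∈ ℝ ∪ {−∞}` there is a maximizer `p_L` of `J` over `S_L(I₀)`, and:
Rule A: if `ℓ > J(p_L)` then `J₀ = −∞` and `ℓ₀ = ℓ`;
Rule B: if `ℓ ≤ J(p_L)` and `p_L ∈ S(I₀)` then `p₀ = p_L`, `J₀ = J(p_L)`,
`ℓ₀ = max(ℓ, J₀)`;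
Rule C: otherwise `I₀` is split into disjoint nonempty `I₁ ∪ I₂ = I₀`, and with
`(p₁, J₁, ℓ₁) = D I₁ ℓ`, `(p₂, J₂, ℓ₂) = D I₂ ℓ₁`, the result is the better of
`p₁, p₂`, with `J₀ = max(J₁, J₂)` and `ℓ₀ = max(ℓ₂, J₀)`. -/
def DCDPSpec (n m ς : ℕ) (J : (Fin (m+1) → ℤ) → ℝ)
    (D : Set ℤ → EReal → (Fin (m+1) → ℤ) × EReal × EReal) : Prop :=
  ∀ (I₀ : Set ℤ) (ℓ : EReal), I₀.Finite → I₀.Nonempty → I₀ ⊆ Set.Icc 1 (n : ℤ) →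
    ∃ pL : Fin (m+1) → ℤ,
      pL ∈ SLReg n m ς I₀ ∧ (∀ q ∈ SLReg n m ς I₀, J q ≤ J pL) ∧
      (((J pL : ℝ) : EReal) < ℓ ∧ (D I₀ ℓ).2.1 = ⊥ ∧ (D I₀ ℓ).2.2 = ℓ
       ∨
       ℓ ≤ ((J pL : ℝ) : EReal) ∧ pL ∈ SReg n m ς I₀ ∧
         (D I₀ ℓ).1 = pL ∧ (D I₀ ℓ).2.1 = ((J pL : ℝ) : EReal) ∧
         (D I₀ ℓ).2.2 = max ℓ ((J pL : ℝ) : EReal)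
       ∨
       ℓ ≤ ((J pL : ℝ) : EReal) ∧ pL ∉ SReg n m ς I₀ ∧
         ∃ I₁ I₂ : Set ℤ, Disjoint I₁ I₂ ∧ I₁.Nonempty ∧ I₂.Nonempty ∧
           I₁ ∪ I₂ = I₀ ∧
           (D I₀ ℓ).1 = (if (D I₂ (D I₁ ℓ).2.2).2.1 ≤ (D I₁ ℓ).2.1
                          then (D I₁ ℓ).1 else (D I₂ (D I₁ ℓ).2.2).1) ∧
           (D I₀ ℓ).2.1 = max (D I₁ ℓ).2.1 (D I₂ (D I₁ ℓ).2.2).2.1 ∧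
           (D I₀ ℓ).2.2 = max (D I₂ (D I₁ ℓ).2.2).2.2 (D I₀ ℓ).2.1)

lemma dcdp_aux (n m ς : ℕ) (J : (Fin (m+1) → ℤ) → ℝ)
    (D : Set ℤ → EReal → (Fin (m+1) → ℤ) × EReal × EReal)
    (hD : DCDPSpec n m ς J D) :
    ∀ k : ℕ, ∀ (I₀ : Set ℤ) (ℓ : EReal), I₀.Finite → I₀.Nonempty →
      I₀ ⊆ Set.Icc 1 (n : ℤ) → I₀.ncard ≤ k →
      ((∃ q ∈ SReg n m ς I₀, ℓ ≤ ((J q : ℝ) : EReal)) →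
        (D I₀ ℓ).1 ∈ SReg n m ς I₀ ∧
        (∀ q ∈ SReg n m ς I₀, J q ≤ J (D I₀ ℓ).1) ∧
        (D I₀ ℓ).2.1 = ((J (D I₀ ℓ).1 : ℝ) : EReal) ∧
        (D I₀ ℓ).2.2 = (D I₀ ℓ).2.1 ∧
        ℓ ≤ (D I₀ ℓ).2.1) ∧
      ((∀ q ∈ SReg n m ς I₀, ((J q : ℝ) : EReal) < ℓ) →
        (D I₀ ℓ).2.1 < ℓ ∧ (D I₀ ℓ).2.2 = ℓ) := by
  intro k
  induction k with
  | zero =>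
    intro I₀ ℓ hfin hne hsub hcard
    have := (Set.ncard_pos hfin).2 hne
    omega
  | succ k ih =>
    intro I₀ ℓ hfin hne hsub hcard
    obtain ⟨pL, hpLm, hpLmax, hA | hB | hC⟩ := hD I₀ ℓ hfin hne hsub
    · -- Rule A
      obtain ⟨hlt, hJ0, hl0⟩ := hA
      constructor
      · rintro ⟨q, hq, hlq⟩
        have h1 : ((J q : ℝ) : EReal) ≤ ((J pL : ℝ) : EReal) :=
          EReal.coe_le_coe_iff.2 (hpLmax q (sreg_subset_slreg n m ς I₀ hq))
        exact absurd hlq (not_le.2 (h1.trans_lt hlt))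
      · intro _
        rw [hJ0, hl0]
        exact ⟨(EReal.bot_lt_coe _).trans hlt, rfl⟩
    · -- Rule B
      obtain ⟨hle, hpS, hp0, hJ0, hl0⟩ := hB
      constructor
      · intro _
        rw [hp0, hJ0, hl0]
        exact ⟨hpS, fun q hq => hpLmax q (sreg_subset_slreg n m ς I₀ hq),
          rfl, max_eq_right hle, hle⟩
      · intro hall
        exact absurd (hall pL hpS) (not_lt.2 hle)
    · -- Rule C
      obtain ⟨hle, hnotS, I₁, I₂, hdisj, hne1, hne2, hunion, hp0, hJ0, hl0⟩ := hC
      have hI1sub : I₁ ⊆ I₀ := hunion ▸ Set.subset_union_left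
      have hI2sub : I₂ ⊆ I₀ := hunion ▸ Set.subset_union_right
      have hfin1 : I₁.Finite := hfin.subset hI1sub
      have hfin2 : I₂.Finite := hfin.subset hI2sub
      have hcards : I₁.ncard + I₂.ncard = I₀.ncard := by
        rw [← hunion, Set.ncard_union_eq hdisj hfin1 hfin2]
      have h1pos : 0 < I₁.ncard := (Set.ncard_pos hfin1).2 hne1
      have h2pos : 0 < I₂.ncard := (Set.ncard_pos hfin2).2 hne2
      have H1 := ih I₁ ℓ hfin1 hne1 (hI1sub.trans hsub) (by omega)
      have H2 := ih I₂ (D I₁ ℓ).2.2 hfin2 hne2 (hI2sub.trans hsub) (by omega)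
      have hSsplit : SReg n m ς I₀ = SReg n m ς I₁ ∪ SReg n m ς I₂ := by
        rw [← hunion, sreg_union]
      by_cases h1 : ∃ q ∈ SReg n m ς I₁, ℓ ≤ ((J q : ℝ) : EReal)
      · -- maximum over I₁ part is ≥ ℓ
        obtain ⟨hp1S, hp1max, hJ1, hl1, hℓJ1⟩ := H1.1 h1
        constructor
        · intro _
          by_cases h2 : ∃ q ∈ SReg n m ς I₂, (D I₁ ℓ).2.2 ≤ ((J q : ℝ) : EReal)
          · obtain ⟨hp2S, hp2max, hJ2, hl2, hℓJ2⟩ := H2.1 h2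
            have hJ1J2 : (D I₁ ℓ).2.1 ≤ (D I₂ (D I₁ ℓ).2.2).2.1 := by
              rw [← hl1]; exact hℓJ2
            have hmax : max (D I₁ ℓ).2.1 (D I₂ (D I₁ ℓ).2.2).2.1
                = (D I₂ (D I₁ ℓ).2.2).2.1 := max_eq_right hJ1J2
            by_cases hif : (D I₂ (D I₁ ℓ).2.2).2.1 ≤ (D I₁ ℓ).2.1
            · have heq : (D I₂ (D I₁ ℓ).2.2).2.1 = (D I₁ ℓ).2.1 :=
                le_antisymm hif hJ1J2
              have hreq : J (D I₂ (D I₁ ℓ).2.2).1 = J (D I₁ ℓ).1 := by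
                have := heq
                rw [hJ1, hJ2] at this
                exact_mod_cast this
              rw [hp0, if_pos hif]
              refine ⟨hSsplit ▸ Or.inl hp1S, ?_, ?_, ?_, ?_⟩
              · intro q hq
                rw [hSsplit] at hq
                rcases hq with hq | hq
                · exact hp1max q hq
                · exact (hp2max q hq).trans (le_of_eq hreq)
              · rw [hJ0, hmax, heq, hJ1]
              · rw [hl0, hJ0, hmax, hl2, max_self]
              · rw [hJ0, hmax, heq]
                exact hℓJ1
            · rw [hp0, if_neg hif]
              have hle12 : J (D I₁ ℓ).1 ≤ J (D I₂ (D I₁ ℓ).2.2).1 := by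
                have := hJ1J2
                rw [hJ1, hJ2] at this
                exact_mod_cast this
              refine ⟨hSsplit ▸ Or.inr hp2S, ?_, ?_, ?_, ?_⟩
              · intro q hq
                rw [hSsplit] at hq
                rcases hq with hq | hq
                · exact (hp1max q hq).trans hle12
                · exact hp2max q hq
              · rw [hJ0, hmax, hJ2]
              · rw [hl0, hJ0, hmax, hl2, max_self]
              · rw [hJ0, hmax]
                exact (hℓJ1.trans_eq hl1.symm).trans hℓJ2
          · -- all of S(I₂) below ℓ₁
            push_neg at h2
            obtain ⟨hJ2lt, hl2eq⟩ := H2.2 h2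
            have hJ2ltJ1 : (D I₂ (D I₁ ℓ).2.2).2.1 < (D I₁ ℓ).2.1 := by
              rw [← hl1]; exact hJ2lt
            have hif : (D I₂ (D I₁ ℓ).2.2).2.1 ≤ (D I₁ ℓ).2.1 := hJ2ltJ1.le
            have hmax : max (D I₁ ℓ).2.1 (D I₂ (D I₁ ℓ).2.2).2.1
                = (D I₁ ℓ).2.1 := max_eq_left hif
            rw [hp0, if_pos hif]
            refine ⟨hSsplit ▸ Or.inl hp1S, ?_, ?_, ?_, ?_⟩
            · intro q hq
              rw [hSsplit] at hq
              rcases hq with hq | hq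
              · exact hp1max q hq
              · have := (h2 q hq).le
                rw [hl1, hJ1] at this
                exact_mod_cast this
            · rw [hJ0, hmax, hJ1]
            · rw [hl0, hJ0, hmax, hl2eq, hl1, max_self]
            · rw [hJ0, hmax, ← hl1]
              exact hℓJ1.trans_eq hl1.symm
        · -- L case impossible here
          intro hall
          obtain ⟨q, hq, hlq⟩ := h1
          exact absurd (hall q (hSsplit ▸ Or.inl hq)) (not_lt.2 hlq)
      · -- all of S(I₁) below ℓ
        push_neg at h1
        obtain ⟨hJ1lt, hl1eq⟩ := H1.2 h1
        by_cases h2 : ∃ q ∈ SReg n m ς I₂, (D I₁ ℓ).2.2 ≤ ((J q : ℝ) : EReal)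
        · obtain ⟨hp2S, hp2max, hJ2, hl2, hℓJ2⟩ := H2.1 h2
          have hℓJ2' : ℓ ≤ (D I₂ (D I₁ ℓ).2.2).2.1 := hl1eq.symm.trans_le hℓJ2
          have hJ1ltJ2 : (D I₁ ℓ).2.1 < (D I₂ (D I₁ ℓ).2.2).2.1 :=
            (hJ1lt.trans_eq hl1eq.symm).trans_le hℓJ2
          have hif : ¬ (D I₂ (D I₁ ℓ).2.2).2.1 ≤ (D I₁ ℓ).2.1 :=
            not_le.2 hJ1ltJ2
          have hmax : max (D I₁ ℓ).2.1 (D I₂ (D I₁ ℓ).2.2).2.1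
              = (D I₂ (D I₁ ℓ).2.2).2.1 := max_eq_right hJ1ltJ2.le
          constructor
          · intro _
            rw [hp0, if_neg hif]
            refine ⟨hSsplit ▸ Or.inr hp2S, ?_, ?_, ?_, ?_⟩
            · intro q hq
              rw [hSsplit] at hq
              rcases hq with hq | hq
              · have := ((h1 q hq).trans_le hℓJ2').le
                rw [hJ2] at this
                exact_mod_cast this
              · exact hp2max q hq
            · rw [hJ0, hmax, hJ2]
            · rw [hl0, hJ0, hmax, hl2, max_self]
            · rw [hJ0, hmax]; exact hℓJ2'
          · intro hall
            obtain ⟨q, hq, hlq⟩ := h2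
            rw [hl1eq] at hlq
            exact absurd (hall q (hSsplit ▸ Or.inr hq)) (not_lt.2 hlq)
        · push_neg at h2
          obtain ⟨hJ2lt, hl2eq⟩ := H2.2 h2
          have hJ2lt' : (D I₂ (D I₁ ℓ).2.2).2.1 < ℓ := hJ2lt.trans_eq hl1eq
          have hJ0lt : (D I₀ ℓ).2.1 < ℓ := by
            rw [hJ0]; exact max_lt hJ1lt hJ2lt'
          constructor
          · rintro ⟨q, hq, hlq⟩
            rw [hSsplit] at hq
            rcases hq with hq | hq
            · exact absurd (h1 q hq) (not_lt.2 hlq)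
            · have := h2 q hq
              rw [hl1eq] at this
              exact absurd this (not_lt.2 hlq)
          · intro _
            refine ⟨hJ0lt, ?_⟩
            rw [hl0, hl2eq, hl1eq]
            exact max_eq_left hJ0lt.le

/-- Lemma 1 of the paper, full correctness of DCDP with
pruning: for every procedure `D` satisfying the recursive specification,
every nonempty finite `I₀ ⊆ {1,…,n}` and every `ℓ ∈ ℝ ∪ {−∞}`:
Case G: if `max_{S(I₀)} J ≥ ℓ` then `p₀` maximizes `J` over `S(I₀)` and
`J₀ = ℓ₀ = J(p₀) ≥ ℓ`;
Case L: if `max_{S(I₀)} J < ℓ` then `J₀ < ℓ₀ = ℓ`. -/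
theorem dcdp_lemma1 (n m ς : ℕ) (hn : 1 ≤ n) (hς : 1 ≤ ς)
    (L : Fin (m+1) → ℤ → ℝ) (J : (Fin (m+1) → ℤ) → ℝ)
    (hJ : J = fun p => ∑ i, L i (p i))
    (D : Set ℤ → EReal → (Fin (m+1) → ℤ) × EReal × EReal)
    (hD : DCDPSpec n m ς J D) :
    ∀ (I₀ : Set ℤ) (ℓ : EReal), I₀.Finite → I₀.Nonempty →
      I₀ ⊆ Set.Icc 1 (n : ℤ) →
      ((∃ q ∈ SReg n m ς I₀, ℓ ≤ ((J q : ℝ) : EReal)) →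
        (D I₀ ℓ).1 ∈ SReg n m ς I₀ ∧
        (∀ q ∈ SReg n m ς I₀, J q ≤ J (D I₀ ℓ).1) ∧
        (D I₀ ℓ).2.1 = ((J (D I₀ ℓ).1 : ℝ) : EReal) ∧
        (D I₀ ℓ).2.2 = (D I₀ ℓ).2.1 ∧
        ℓ ≤ (D I₀ ℓ).2.1) ∧
      ((∀ q ∈ SReg n m ς I₀, ((J q : ℝ) : EReal) < ℓ) →
        (D I₀ ℓ).2.1 < ℓ ∧ (D I₀ ℓ).2.2 = ℓ) := by
  intro I₀ ℓ hfin hne hsub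
  exact dcdp_aux n m ς J D hD I₀.ncard I₀ ℓ hfin hne hsub le_rfl
end
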